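/- Suppose ε = 0, ρ = 0 and Δ₁ := AD - BC = 0. Then Δ₂ := ½(|B|² + |C|² - AD̄ - ĀD) ≥ 0, and Δ₂ = 0 if and only if the five conditions |B|² = |C|², AD̄ = ĀD, AB̄ = ĀC, DB̄ = D̄C hold (i.e. dω³ and dω̄³ are linearly dependent). -/

import Mathlib

open Complex

/-- Suppose `ε = 0`, `ρ = 0` and `Δ₁ = AD - BC = 0`.  Then
`Δ₂ = ½(|B|² + |C|² - AD̄ - ĀD) ≥ 0`, and `Δ₂ = 0` if and only if the conditions
`|B|² = |C|²`, `AD̄ = ĀD`, `AB̄ = ĀC`, `DB̄ = D̄C` hold (linear dependence of `dω³` and `dω̄³`). -/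
theorem delta2_nonneg_and_zero_iff_dependent (A B C D : ℂ)
    (hΔ₁ : A * D - B * C = 0) :
    0 ≤ (Complex.normSq B + Complex.normSq C -
        (A * (starRingEnd ℂ) D + (starRingEnd ℂ) A * D).re) / 2 ∧
    ((Complex.normSq B + Complex.normSq C -
        (A * (starRingEnd ℂ) D + (starRingEnd ℂ) A * D).re) / 2 = 0 ↔
      (Complex.normSq B = Complex.normSq C ∧
        A * (starRingEnd ℂ) D = (starRingEnd ℂ) A * D ∧
        A * (starRingEnd ℂ) B = (starRingEnd ℂ) A * C ∧
        D * (starRingEnd ℂ) B = (starRingEnd ℂ) D * C)) := by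
  have hAD : A * D = B * C := sub_eq_zero.mp hΔ₁
  have hconj : (starRingEnd ℂ) A * D = (starRingEnd ℂ) (A * (starRingEnd ℂ) D) := by
    simp [map_mul]
  set z := A * (starRingEnd ℂ) D with hz
  have hre2 : (z + (starRingEnd ℂ) A * D).re = 2 * z.re := by
    rw [hconj, Complex.add_re, Complex.conj_re]; ring
  have habs : ‖z‖ = ‖B‖ * ‖C‖ := by
    rw [hz, norm_mul, Complex.norm_conj, ← norm_mul, hAD, norm_mul]
  have hle1 : z.re ≤ ‖B‖ * ‖C‖ := habs ▸ Complex.re_le_norm z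
  have hBn : Complex.normSq B = ‖B‖ ^ 2 := (Complex.sq_norm B).symm
  have hCn : Complex.normSq C = ‖C‖ ^ 2 := (Complex.sq_norm C).symm
  have hle2 : ‖B‖ * ‖C‖ ≤ (Complex.normSq B + Complex.normSq C) / 2 := by
    rw [hBn, hCn]; nlinarith [sq_nonneg (‖B‖ - ‖C‖)]
  refine ⟨by rw [hre2]; linarith, ?_, ?_⟩
  · intro h0
    rw [hre2] at h0
    have habseq : ‖B‖ = ‖C‖ := by nlinarith
    have hnBC : Complex.normSq B = Complex.normSq C := by rw [hBn, hCn, habseq]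
    have hrez : z.re = Complex.normSq B := by rw [hBn]; nlinarith
    have hreabs : z.re = ‖z‖ := by
      rw [habs, hrez, hBn, habseq]; ring
    have him : z.im = 0 := by
      have h1 := Complex.sq_norm z
      have h2 := Complex.normSq_apply z
      have : z.im ^ 2 = 0 := by nlinarith
      exact sq_eq_zero_iff.mp this
    have hzeq : z = ((Complex.normSq B : ℝ) : ℂ) := by
      apply Complex.ext
      · simpa using hrez
      · simpa using him
    have hcond2 : z = (starRingEnd ℂ) A * D := by
      rw [hconj, hzeq, Complex.conj_ofReal]
    refine ⟨hnBC, hcond2, ?_, ?_⟩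
    · by_cases hB : B = 0
      · have hC : C = 0 := by
          rw [← Complex.normSq_eq_zero, ← hnBC, Complex.normSq_eq_zero]; exact hB
        simp [hB, hC]
      · have hDne : (starRingEnd ℂ) D ≠ 0 := by
          intro h
          rw [hz, h, mul_zero] at hzeq
          exact hB (Complex.normSq_eq_zero.mp (by exact_mod_cast hzeq.symm))
        apply mul_right_cancel₀ hDne
        have hADc : (starRingEnd ℂ) A * (starRingEnd ℂ) D
            = (starRingEnd ℂ) B * (starRingEnd ℂ) C := by
          rw [← map_mul, ← map_mul, hAD]
        have hCC : C * (starRingEnd ℂ) C = ((Complex.normSq C : ℝ) : ℂ) :=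
          Complex.mul_conj C
        have hnBC' : ((Complex.normSq C : ℝ) : ℂ) = ((Complex.normSq B : ℝ) : ℂ) := by
          exact_mod_cast hnBC.symm
        linear_combination (starRingEnd ℂ) B * (hz.symm.trans hzeq) - C * hADc
          - (starRingEnd ℂ) B * (hCC.trans hnBC')
    · by_cases hB : B = 0
      · have hC : C = 0 := by
          rw [← Complex.normSq_eq_zero, ← hnBC, Complex.normSq_eq_zero]; exact hB
        simp [hB, hC]
      · have hAne : (starRingEnd ℂ) A ≠ 0 := by
          intro h
          have hA : A = 0 := by simpa using congrArg (starRingEnd ℂ) h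
          rw [hz, hA, zero_mul] at hzeq
          exact hB (Complex.normSq_eq_zero.mp (by exact_mod_cast hzeq.symm))
        apply mul_right_cancel₀ hAne
        have hADc : (starRingEnd ℂ) A * (starRingEnd ℂ) D
            = (starRingEnd ℂ) B * (starRingEnd ℂ) C := by
          rw [← map_mul, ← map_mul, hAD]
        have hCC : C * (starRingEnd ℂ) C = ((Complex.normSq C : ℝ) : ℂ) :=
          Complex.mul_conj C
        have hnBC' : ((Complex.normSq C : ℝ) : ℂ) = ((Complex.normSq B : ℝ) : ℂ) := by
          exact_mod_cast hnBC.symm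
        have hcz : (starRingEnd ℂ) A * D = ((Complex.normSq B : ℝ) : ℂ) :=
          hcond2.symm.trans hzeq
        linear_combination (starRingEnd ℂ) B * hcz - C * hADc
          - (starRingEnd ℂ) B * (hCC.trans hnBC')
  · rintro ⟨h1, h2, h3, h4⟩
    have hzre : z = ((Complex.normSq B : ℝ) : ℂ) := by
      by_cases hC : C = 0
      · have hB : B = 0 := by
          rw [← Complex.normSq_eq_zero, h1, Complex.normSq_eq_zero]; exact hC
        have : A = 0 ∨ D = 0 := by
          have := hAD; rw [hB, zero_mul] at this; exact mul_eq_zero.mp this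
        rcases this with hA | hD
        · simp [hz, hA, hB]
        · simp [hz, hD, hB]
      · apply mul_right_cancel₀ hC
        have hBB : B * (starRingEnd ℂ) B = ((Complex.normSq B : ℝ) : ℂ) :=
          Complex.mul_conj B
        linear_combination C * h2 - D * h3 + (starRingEnd ℂ) B * hAD + C * hBB
    have : z.re = Complex.normSq B := by rw [hzre]; simp
    rw [hre2, this, h1]; ring
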